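/- Let β > 0 and ε > 0. At the parameter value μ = μ_c, the Jacobian matrix of (S) at E₂ = (√(β/ε), 0) has the pair of purely imaginary eigenvalues ±i√(2β). Moreover, for μ₁ < μ < μ₂ the common real part of the two complex-conjugate eigenvalues of the Jacobian at E₂ equals (μ − μ_c)/2, so its derivative with respect to μ is 1/2 > 0 (the transversality condition for the Hopf bifurcation). -/
import Mathlib


set_option linter.unusedVariables false

open Polynomial

/-- The Jacobian matrix of the system (S): x' = y, y' = (μ + x² − x⁴)y + βx − εx³
    at an equilibrium (x₀, 0). -/
def jacobianS (μ β ε x₀ : ℝ) : Matrix (Fin 2) (Fin 2) ℝ :=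
  !![0, 1; β - 3 * ε * x₀ ^ 2, μ + x₀ ^ 2 - x₀ ^ 4]

lemma charpoly_fin2 (a b c d : ℝ) :
    (!![a,b;c,d]).charpoly = (X - C a) * (X - C d) - C b * C c := by
  rw [Matrix.charpoly, Matrix.det_fin_two]
  simp [Matrix.charmatrix_apply_eq, Matrix.charmatrix_apply_ne]

lemma aeval_jacobianS (μ β ε x₀ : ℝ) (z : ℂ) :
    (Polynomial.aeval z) ((jacobianS μ β ε x₀).charpoly)
      = z * (z - ((μ + x₀ ^ 2 - x₀ ^ 4 : ℝ) : ℂ)) - ((β - 3 * ε * x₀ ^ 2 : ℝ) : ℂ) := by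
  rw [jacobianS, charpoly_fin2]
  push_cast
  simp

/-- At μ = μ_c the Jacobian of (S) at E₂ = (√(β/ε), 0) has the purely imaginary
    eigenvalues ±i√(2β) (the roots of its characteristic polynomial over ℂ), and
    for μ₁ < μ < μ₂ the common real part of the two complex-conjugate eigenvalues
    is (μ − μ_c)/2, whose derivative with respect to μ is 1/2 > 0
    (the Hopf transversality condition). -/
theorem hopf_eigenvalues_and_transversality (β ε : ℝ) (hβ : 0 < β) (hε : 0 < ε) :
    let μc : ℝ := (β ^ 2 - ε * β) / ε ^ 2
    let μ₁ : ℝ := μc - 2 * Real.sqrt (2 * β)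
    let μ₂ : ℝ := μc + 2 * Real.sqrt (2 * β)
    (∀ z : ℂ, (Polynomial.aeval z)
        ((jacobianS μc β ε (Real.sqrt (β / ε))).charpoly) = 0 ↔
        z = Complex.I * Real.sqrt (2 * β) ∨ z = -(Complex.I * Real.sqrt (2 * β))) ∧
    (∀ μ : ℝ, μ₁ < μ → μ < μ₂ → ∀ z : ℂ, (Polynomial.aeval z)
        ((jacobianS μ β ε (Real.sqrt (β / ε))).charpoly) = 0 →
        z.re = (μ - μc) / 2) ∧
    (∀ μ : ℝ, HasDerivAt (fun m : ℝ => (m - μc) / 2) (1 / 2) μ) ∧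
    (0 : ℝ) < 1 / 2 := by
  intro μc μ₁ μ₂
  have hx2 : (Real.sqrt (β / ε)) ^ 2 = β / ε :=
    Real.sq_sqrt (le_of_lt (div_pos hβ hε))
  have hx4 : (Real.sqrt (β / ε)) ^ 4 = (β / ε) ^ 2 := by
    rw [show (4:ℕ) = 2 * 2 from rfl, pow_mul, hx2]
  have hc : β - 3 * ε * (Real.sqrt (β / ε)) ^ 2 = -(2 * β) := by
    rw [hx2]; field_simp; ring
  have hs2β : (Real.sqrt (2 * β)) ^ 2 = 2 * β :=
    Real.sq_sqrt (by positivity)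
  have hεne : (ε : ℝ) ≠ 0 := ne_of_gt hε
  refine ⟨?_, ?_, ?_, by norm_num⟩
  · intro z
    have hd : μc + (Real.sqrt (β / ε)) ^ 2 - (Real.sqrt (β / ε)) ^ 4 = 0 := by
      rw [hx2, hx4]; show (β ^ 2 - ε * β) / ε ^ 2 + β / ε - (β / ε) ^ 2 = 0
      field_simp; ring
    rw [aeval_jacobianS, hd, hc]
    have hw : (Complex.I * ((Real.sqrt (2 * β) : ℝ) : ℂ)) ^ 2 = -(2 * (β : ℂ)) := by
      rw [mul_pow, Complex.I_sq, ← Complex.ofReal_pow, hs2β]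
      push_cast
      ring
    constructor
    · intro h
      push_cast at h
      have h' : (z - Complex.I * ((Real.sqrt (2 * β) : ℝ) : ℂ)) *
          (z + Complex.I * ((Real.sqrt (2 * β) : ℝ) : ℂ)) = 0 := by
        linear_combination h - hw
      rcases mul_eq_zero.mp h' with h1 | h1
      · exact Or.inl (by linear_combination h1)
      · exact Or.inr (by linear_combination h1)
    · rintro (rfl | rfl) <;> (push_cast; linear_combination hw)
  · intro μ h1 h2 z hz
    have h1' : μc - 2 * Real.sqrt (2 * β) < μ := h1
    have h2' : μ < μc + 2 * Real.sqrt (2 * β) := h2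
    set T : ℝ := μ - μc with hT
    have hd : μ + (Real.sqrt (β / ε)) ^ 2 - (Real.sqrt (β / ε)) ^ 4 = T := by
      rw [hx2, hx4, hT]; show μ + β / ε - (β / ε) ^ 2 = μ - (β ^ 2 - ε * β) / ε ^ 2
      field_simp; ring
    rw [aeval_jacobianS, hd, hc] at hz
    have hT2 : T ^ 2 < 8 * β := by
      have hgt : 0 < 2 * Real.sqrt (2 * β) - T := by rw [hT]; linarith
      have hlt : 0 < 2 * Real.sqrt (2 * β) + T := by rw [hT]; linarith
      nlinarith [mul_pos hgt hlt, hs2β]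
    have hre := congrArg Complex.re hz
    have him := congrArg Complex.im hz
    simp [Complex.mul_re, Complex.mul_im, Complex.sub_re, Complex.sub_im] at hre him
    rcases eq_or_ne z.im 0 with hb | hb
    · exfalso
      rw [hb] at hre
      clear_value T
      clear hz him hT hd h1 h2 h1' h2'
      nlinarith [sq_nonneg (z.re - T / 2), hre, hT2]
    · have h2a : z.im * (2 * z.re - T) = 0 := by linear_combination him
      rcases mul_eq_zero.mp h2a with h | h
      · exact absurd h hb
      · rw [hT] at h; linarith
  · intro μ
    have h := ((hasDerivAt_id μ).sub_const μc).div_const 2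
    simpa using h
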